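/- Let d = min(m, n). The characteristic polynomial of S = [[I_m, Σ], [Σᵀ, −I_n]] is (X − 1)^{m−d} (X + 1)^{n−d} ∏_{i=1}^{d} (X² − (σ_i² + 1)); in particular the eigenvalues of S are ±√(σ_i² + 1) for i = 1, …, d, together with 1 with multiplicity m − d and −1 with multiplicity n − d. -/

import Mathlib

open Matrix Polynomial

set_option maxHeartbeats 2000000

/-- The characteristic polynomial of `S = [[I_m, Σ], [Σᵀ, −I_n]]` is
`(X − 1)^{m−d} (X + 1)^{n−d} ∏_{i=1}^{d} (X² − (σ_i² + 1))` with `d = min m n`;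
in particular the eigenvalues of `S` are `±√(σ_i² + 1)` for `i = 1, …, d`, together with
`1` with multiplicity `m − d` and `−1` with multiplicity `n − d`. -/
theorem charpoly_S_block (m n : ℕ)
    (Sig : Matrix (Fin m) (Fin n) ℝ)
    (hSigDiag : ∀ (i : Fin m) (j : Fin n), (i : ℕ) ≠ (j : ℕ) → Sig i j = 0)
    (hSigNonneg : ∀ (i : Fin m) (j : Fin n), (i : ℕ) = (j : ℕ) → 0 ≤ Sig i j)
    (S : Matrix (Fin m ⊕ Fin n) (Fin m ⊕ Fin n) ℝ)
    (hS : S = Matrix.fromBlocks 1 Sig Sigᵀ (-1)) :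
    S.charpoly =
      (X - 1) ^ (m - min m n) * (X + 1) ^ (n - min m n) *
        ∏ i : Fin (min m n),
          (X ^ 2 - C ((Sig (Fin.castLE (min_le_left m n) i)
              (Fin.castLE (min_le_right m n) i)) ^ 2 + 1)) := by
  subst hS
  set d := min m n with hd
  have hdm : d ≤ m := min_le_left m n
  have hdn : d ≤ n := min_le_right m n
  set K := FractionRing (Polynomial ℝ)
  set φ : Polynomial ℝ →+* K := algebraMap (Polynomial ℝ) K with hφ
  have hinj : Function.Injective φ := IsFractionRing.injective (Polynomial ℝ) K
  apply hinj
  set r : ℝ →+* K := φ.comp (C : ℝ →+* Polynomial ℝ) with hr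
  set x : K := φ X with hxdef
  have hx : x + 1 ≠ 0 := by
    have : φ (X + 1) ≠ 0 := fun h => by
      have := hinj (h.trans (map_zero φ).symm)
      simpa using congrArg (fun p => p.coeff 0) this
    simpa using this
  set t : Fin m → K := fun i => if h : (i : ℕ) < n then (r (Sig i ⟨i, h⟩)) ^ 2 else 0 with ht
  letI : Invertible (x + 1) := invertibleOfNonzero hx
  letI hD : Invertible ((x + 1) • (1 : Matrix (Fin n) (Fin n) K)) :=
    ⟨(⅟(x + 1)) • 1, by
      rw [smul_mul_smul_comm, invOf_mul_self, one_mul, one_smul], by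
      rw [smul_mul_smul_comm, mul_invOf_self, one_mul, one_smul]⟩
  have h1 : (charmatrix (1 : Matrix (Fin m) (Fin m) ℝ)).map φ
      = (x - 1) • (1 : Matrix (Fin m) (Fin m) K) := by
    ext i j
    rcases eq_or_ne i j with rfl | hij
    · simp [charmatrix_apply_eq, Matrix.one_apply]; exact hxdef.symm
    · simp [charmatrix_apply_ne _ _ _ hij, Matrix.one_apply, hij]
  have h2 : (charmatrix (-1 : Matrix (Fin n) (Fin n) ℝ)).map φ
      = (x + 1) • (1 : Matrix (Fin n) (Fin n) K) := by
    ext i j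
    rcases eq_or_ne i j with rfl | hij
    · simp [charmatrix_apply_eq, Matrix.one_apply, sub_neg_eq_add]; exact hxdef.symm
    · simp [charmatrix_apply_ne _ _ _ hij, Matrix.one_apply, hij]
  have hmap : ((fromBlocks (1 : Matrix (Fin m) (Fin m) ℝ) Sig Sigᵀ (-1)).charmatrix).map φ
      = fromBlocks ((x - 1) • 1) (-(Sig.map r)) (-(Sigᵀ.map r)) ((x + 1) • 1) := by
    have hB : ((-(Sig.map (C : ℝ →+* Polynomial ℝ))).map φ) = -(Sig.map r) := by
      ext i j; simp [hr]
    have hB' : ((-(Sigᵀ.map (C : ℝ →+* Polynomial ℝ))).map φ) = -(Sigᵀ.map r) := by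
      ext i j; simp [hr]
    rw [charmatrix_fromBlocks, Matrix.fromBlocks_map, hB, hB', h1, h2]
  have hSS : (Sig.map r) * (Sig.map r)ᵀ = diagonal t := by
    ext i j
    rcases eq_or_ne i j with rfl | hij
    · simp only [Matrix.mul_apply, Matrix.transpose_apply, Matrix.map_apply, diagonal_apply_eq, ht]
      by_cases h : (i : ℕ) < n
      · rw [dif_pos h]
        rw [Finset.sum_eq_single (⟨(i : ℕ), h⟩ : Fin n)]
        · ring
        · intro k _ hk
          rw [hSigDiag i k (fun he => hk (Fin.ext (by simpa using he.symm)))]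
          simp
        · simp
      · rw [dif_neg h]
        apply Finset.sum_eq_zero
        intro k _
        rw [hSigDiag i k (by omega)]
        simp
    · simp only [Matrix.mul_apply, Matrix.transpose_apply, Matrix.map_apply,
        diagonal_apply_ne _ hij]
      apply Finset.sum_eq_zero
      intro k _
      have : (i : ℕ) ≠ (j : ℕ) := fun h => hij (Fin.ext h)
      rcases eq_or_ne (i : ℕ) (k : ℕ) with hik | hik
      · rw [hSigDiag j k (by omega)]; simp
      · rw [hSigDiag i k hik]; simp
  have lhs_eq : φ ((fromBlocks (1 : Matrix (Fin m) (Fin m) ℝ) Sig Sigᵀ (-1)).charpoly)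
      = (x + 1) ^ n * ∏ i : Fin m, ((x - 1) - ⅟(x + 1) * t i) := by
    rw [Matrix.charpoly, RingHom.map_det]
    have : φ.mapMatrix (fromBlocks (1 : Matrix (Fin m) (Fin m) ℝ) Sig Sigᵀ (-1)).charmatrix
        = fromBlocks ((x - 1) • 1) (-(Sig.map r)) (-(Sigᵀ.map r)) ((x + 1) • 1) := hmap
    rw [this, Matrix.det_fromBlocks₂₂]
    have hinv : ⅟((x + 1) • (1 : Matrix (Fin n) (Fin n) K)) = (⅟(x + 1)) • 1 := rfl
    rw [hinv]
    have hprod : -(Sig.map r) * ((⅟(x + 1)) • (1 : Matrix (Fin n) (Fin n) K)) * -(Sigᵀ.map r)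
        = (⅟(x+1)) • diagonal t := by
      rw [Matrix.mul_smul, Matrix.mul_one, Matrix.smul_mul]
      congr 1
      rw [Matrix.neg_mul, Matrix.mul_neg, neg_neg]
      rw [show (Sigᵀ.map r) = (Sig.map r)ᵀ from rfl, hSS]
    rw [hprod]
    have hdg : ((x - 1) • (1 : Matrix (Fin m) (Fin m) K)) - (⅟(x+1)) • diagonal t
        = diagonal (fun i => (x - 1) - ⅟(x + 1) * t i) := by
      ext i j
      rcases eq_or_ne i j with rfl | hij
      · simp [Matrix.smul_apply, Matrix.one_apply, smul_eq_mul]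
      · simp [Matrix.smul_apply, Matrix.one_apply, hij]
    rw [hdg, Matrix.det_diagonal, Matrix.det_smul, Matrix.det_one, mul_one]
    simp
  rw [lhs_eq]
  rw [_root_.map_mul, _root_.map_mul, _root_.map_pow, _root_.map_pow, _root_.map_prod]
  simp only [map_sub, map_add, _root_.map_one, map_pow, ← hxdef]
  have hfac : ∀ i : Fin m, (x - 1) - ⅟(x + 1) * t i = ⅟(x + 1) * (x ^ 2 - (t i + 1)) := by
    intro i
    apply mul_left_cancel₀ hx
    rw [← mul_assoc, mul_invOf_self, one_mul]
    have h2 : (x + 1) * (⅟(x+1) * t i) = t i := by rw [← mul_assoc, mul_invOf_self, one_mul]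
    rw [mul_sub, h2]
    ring
  rw [Finset.prod_congr rfl (fun i _ => hfac i), Finset.prod_mul_distrib, Finset.prod_const,
    Finset.card_univ, Fintype.card_fin]
  set F : ℕ → K := fun k => if h : k < m ∧ k < n then
      x ^ 2 - ((r (Sig ⟨k, h.1⟩ ⟨k, h.2⟩)) ^ 2 + 1) else x ^ 2 - 1 with hF
  have hFm : ∀ i : Fin m, x ^ 2 - (t i + 1) = F (i : ℕ) := by
    intro i
    by_cases h : (i : ℕ) < n
    · simp only [hF]; rw [dif_pos ⟨i.isLt, h⟩]
      simp [ht, dif_pos h]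
    · simp only [hF]; rw [dif_neg (by omega)]
      simp [ht, dif_neg h]
  have hsplit : ∏ i : Fin m, (x ^ 2 - (t i + 1)) =
      (∏ i : Fin d, (x ^ 2 - ((r (Sig (Fin.castLE hdm i) (Fin.castLE hdn i))) ^ 2 + 1)))
        * ((x - 1) * (x + 1)) ^ (m - d) := by
    calc ∏ i : Fin m, (x ^ 2 - (t i + 1)) = ∏ k ∈ Finset.range m, F k := by
          rw [Finset.prod_congr rfl (fun i _ => hFm i)]
          exact Fin.prod_univ_eq_prod_range F m
      _ = (∏ k ∈ Finset.range d, F k) * ∏ k ∈ Finset.Ico d m, F k :=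
          (Finset.prod_range_mul_prod_Ico F hdm).symm
      _ = (∏ i : Fin d, (x ^ 2 - ((r (Sig (Fin.castLE hdm i) (Fin.castLE hdn i))) ^ 2 + 1)))
            * ((x - 1) * (x + 1)) ^ (m - d) := by
          congr 1
          · rw [← Fin.prod_univ_eq_prod_range F d]
            apply Finset.prod_congr rfl
            intro i _
            simp only [hF]
            rw [dif_pos ⟨lt_of_lt_of_le i.isLt hdm, lt_of_lt_of_le i.isLt hdn⟩]
            rfl
          · have hcF : ∀ k ∈ Finset.Ico d m, F k = (x - 1) * (x + 1) := by
              intro k hk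
              have hk' := Finset.mem_Ico.mp hk
              simp only [hF]
              rw [dif_neg (by omega)]
              ring
            rw [Finset.prod_congr rfl hcF, Finset.prod_const, Nat.card_Ico]
  rw [hsplit]
  have hCσ : ∀ i : Fin d, (φ (C ((Sig (Fin.castLE hdm i) (Fin.castLE hdn i)) ^ 2 + 1)) : K)
      = (r (Sig (Fin.castLE hdm i) (Fin.castLE hdn i))) ^ 2 + 1 := by
    intro i; simp [hr]
  have hiu : (⅟(x + 1) : K) = (x + 1)⁻¹ := by
    apply mul_left_cancel₀ hx
    rw [mul_invOf_self, mul_inv_cancel₀ hx]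
  rw [hiu]
  set P : K := ∏ i : Fin d, (x ^ 2 - ((r (Sig (Fin.castLE hdm i) (Fin.castLE hdn i))) ^ 2 + 1))
    with hP
  have hexp : n + (m - d) = (n - d) + m := by omega
  have key : (x + 1) ^ n * ((x + 1)⁻¹) ^ m * (x + 1) ^ (m - d) = (x + 1) ^ (n - d) := by
    rw [inv_pow]
    have h3 : (x + 1) ^ n * ((x + 1) ^ m)⁻¹ * (x + 1) ^ (m - d)
        = (x + 1) ^ (n + (m - d)) * ((x + 1) ^ m)⁻¹ := by
      rw [pow_add]; ring
    rw [h3, hexp, pow_add, mul_assoc, mul_comm ((x+1)^m), ← mul_assoc,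
      mul_assoc, inv_mul_cancel₀ (pow_ne_zero _ hx), mul_one]
  have hrhs : ∀ i : Fin d, (x ^ 2 - (φ (C ((Sig (Fin.castLE hdm i) (Fin.castLE hdn i)) ^ 2 + 1)) : K))
      = x ^ 2 - ((r (Sig (Fin.castLE hdm i) (Fin.castLE hdn i))) ^ 2 + 1) := by
    intro i; rw [hCσ i]
  calc (x + 1) ^ n * (((x + 1)⁻¹) ^ m * (P * ((x - 1) * (x + 1)) ^ (m - d)))
      = ((x + 1) ^ n * ((x + 1)⁻¹) ^ m * (x + 1) ^ (m - d)) * ((x - 1) ^ (m - d) * P) := by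
        rw [mul_pow]; ring
    _ = (x + 1) ^ (n - d) * ((x - 1) ^ (m - d) * P) := by rw [key]
    _ = (x - 1) ^ (m - d) * (x + 1) ^ (n - d) * P := by ring
    _ = (x - 1) ^ (m - m ⊓ n) * (x + 1) ^ (n - m ⊓ n) *
          ∏ i : Fin (m ⊓ n), (x ^ 2 - (φ (C (Sig (Fin.castLE (min_le_left m n) i)
              (Fin.castLE (min_le_right m n) i))) ^ 2 + 1)) := by
        rw [hP]; rfl
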